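/- The set of totally positive matrices in GL_n(ℝ) is closed under matrix multiplication. -/
import Mathlib

open Finset Equiv Matrix

open scoped Classical in
lemma cauchyBinet {k n : ℕ} (M : Matrix (Fin k) (Fin n) ℝ) (N : Matrix (Fin n) (Fin k) ℝ) :
    (M * N).det = ∑ f ∈ Finset.univ.filter (fun f : Fin k → Fin n => StrictMono f),
      (M.submatrix id f).det * (N.submatrix f id).det := by
  have key : ∀ f : Fin k → Fin n,
      (∑ σ : Perm (Fin k), (Perm.sign σ : ℝ) * ∏ i, M (σ i) (f i) * N (f i) i)
        = (M.submatrix id f).det * ∏ i, N (f i) i := by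
    intro f
    rw [det_apply', sum_mul]
    refine Finset.sum_congr rfl fun σ _ => ?_
    rw [mul_assoc, ← Finset.prod_mul_distrib]
    rfl
  have step1 : (M * N).det
      = ∑ f : Fin k → Fin n, ∑ σ : Perm (Fin k),
          (Perm.sign σ : ℝ) * ∏ i, M (σ i) (f i) * N (f i) i := by
    simp only [det_apply', mul_apply, prod_univ_sum, mul_sum, Fintype.piFinset_univ]
    rw [Finset.sum_comm]
  have step2 : (M * N).det
      = ∑ f ∈ Finset.univ.filter (fun f : Fin k → Fin n => Function.Injective f),
          (M.submatrix id f).det * ∏ i, N (f i) i := by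
    rw [step1]
    rw [Finset.sum_congr rfl fun f _ => key f]
    refine (Finset.sum_subset (filter_subset _ _) fun f _ hf => ?_).symm
    simp only [mem_filter, mem_univ, true_and] at hf
    rw [Function.Injective] at hf
    push_neg at hf
    obtain ⟨i, j, hij, hne⟩ := hf
    rw [det_zero_of_column_eq hne (fun x => by simp [hij]), zero_mul]
  rw [step2]
  have inner : ∀ s : Fin k → Fin n, StrictMono s →
      (∑ π : Perm (Fin k), (M.submatrix id (s ∘ π)).det * ∏ i, N (s (π i)) i)
        = (M.submatrix id s).det * (N.submatrix s id).det := by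
    intro s hs
    have hperm : ∀ π : Perm (Fin k), (M.submatrix id (s ∘ π)).det
        = (Perm.sign π : ℝ) * (M.submatrix id s).det := by
      intro π
      rw [show M.submatrix id (s ∘ π) = (M.submatrix id s).submatrix id π from rfl,
        det_permute']
    simp_rw [hperm]
    rw [det_apply' (N.submatrix s id), Finset.mul_sum]
    refine Finset.sum_congr rfl fun π _ => ?_
    simp only [submatrix_apply, id]
    ring
  calc ∑ f ∈ Finset.univ.filter (fun f : Fin k → Fin n => Function.Injective f),
        (M.submatrix id f).det * ∏ i, N (f i) i
      = ∑ p ∈ (Finset.univ.filter (fun f : Fin k → Fin n => StrictMono f)) ×ˢ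
          (Finset.univ : Finset (Perm (Fin k))),
          (M.submatrix id (p.1 ∘ p.2)).det * ∏ i, N (p.1 (p.2 i)) i := by
        refine (Finset.sum_bij (fun p _ => p.1 ∘ p.2) ?_ ?_ ?_ ?_).symm
        · rintro ⟨s, π⟩ hp
          simp only [mem_product, mem_filter, mem_univ, true_and, and_true] at hp
          simp only [mem_filter, mem_univ, true_and]
          exact hp.injective.comp π.injective
        · rintro ⟨s, π⟩ hp ⟨s', π'⟩ hp' h
          simp only [mem_product, mem_filter, mem_univ, true_and, and_true] at hp hp'
          have h : s ∘ ⇑π = s' ∘ ⇑π' := h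
          have hrange : Set.range s = Set.range s' := by
            rw [← π.surjective.range_comp s, ← π'.surjective.range_comp s', h]
          haveI : WellFoundedLT (Fin k) := inferInstance
          have hss : s = s' := (hp.range_inj hp').mp hrange
          subst hss
          have hππ : π = π' := Equiv.ext fun i => hp.injective (congrFun h i)
          simp [hππ]
        · intro f hf
          simp only [mem_filter, mem_univ, true_and] at hf
          have ht : (Finset.image f Finset.univ).card = k := by
            rw [Finset.card_image_of_injective _ hf, card_univ, Fintype.card_fin]
          set t := Finset.image f Finset.univ with htdef
          have hmem : ∀ i, f i ∈ t := fun i => Finset.mem_image_of_mem f (mem_univ i)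
          have hinj : Function.Injective
              (fun i => (t.orderIsoOfFin ht).symm ⟨f i, hmem i⟩) := by
            intro a b hab
            apply hf
            have := congrArg (fun x => ((t.orderIsoOfFin ht) x : Fin n)) hab
            simpa using this
          refine ⟨⟨t.orderEmbOfFin ht, Equiv.ofBijective _
            ((Finite.injective_iff_bijective).mp hinj)⟩, ?_, ?_⟩
          · simp only [mem_product, mem_filter, mem_univ, true_and, and_true]
            exact (t.orderEmbOfFin ht).strictMono
          · funext i
            show t.orderEmbOfFin ht ((t.orderIsoOfFin ht).symm ⟨f i, hmem i⟩) = f i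
            rw [← Finset.coe_orderIsoOfFin_apply]
            simp
        · intros; rfl
    _ = ∑ s ∈ Finset.univ.filter (fun s : Fin k → Fin n => StrictMono s),
          ∑ π : Perm (Fin k), (M.submatrix id (s ∘ π)).det * ∏ i, N (s (π i)) i := by
        rw [Finset.sum_product]
    _ = _ := Finset.sum_congr rfl fun s hs => inner s (by simpa using hs)

/-- A real square matrix is totally positive if all its minors
(indexed by strictly increasing row and column selections) are strictly positive. -/
def TotallyPos {n : ℕ} (A : Matrix (Fin n) (Fin n) ℝ) : Prop :=
  ∀ (k : ℕ) (r c : Fin k → Fin n), StrictMono r → StrictMono c →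
    0 < (A.submatrix r c).det

/-- The totally positive matrices in `GL_n(ℝ)` are closed under multiplication. -/
theorem totallyPos_mul {n : ℕ} (A B : Matrix (Fin n) (Fin n) ℝ)
    (hAu : IsUnit A.det) (hBu : IsUnit B.det)
    (hA : TotallyPos A) (hB : TotallyPos B) :
    TotallyPos (A * B) := by
  intro k r c hr hc
  have hsub : (A * B).submatrix r c = A.submatrix r id * B.submatrix id c := by
    ext i j
    simp [Matrix.mul_apply]
  rw [hsub, cauchyBinet]
  apply Finset.sum_pos
  · intro f hf
    simp only [Finset.mem_filter, Finset.mem_univ, true_and] at hf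
    rw [Matrix.submatrix_submatrix, Matrix.submatrix_submatrix]
    simp only [Function.comp_id, Function.id_comp]
    exact mul_pos (hA k r f hr hf) (hB k f c hf hc)
  · have hkn : k ≤ n := by
      have := Fintype.card_le_of_injective r hr.injective
      simpa using this
    refine ⟨Fin.castLE hkn, ?_⟩
    simp only [Finset.mem_filter, Finset.mem_univ, true_and]
    exact fun a b hab => by simpa using hab
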